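/- The equivalence relation E₀ on 2^ℕ, where η E₀ η' iff η(n) = η'(n) for all but finitely many n, is not smooth: there is no Borel function f from 2^ℕ to a Polish space (equivalently to 2^ℕ) such that f(η) = f(η') iff η E₀ η'. -/

import Mathlib

open MeasureTheory Filter Set
open scoped ENNReal

namespace E0Aux

abbrev G := ℕ → ZMod 2

lemma zmod2_cases : ∀ z : ZMod 2, z = 0 ∨ z = 1 := by decide

lemma zmod2_key : ∀ a c : ZMod 2, (1 + a = c ↔ a = c + 1) := by decide

lemma zmod2_ne : ∀ b : ZMod 2, b ≠ b + 1 := by decide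

lemma zmod2_cover : ∀ z b : ZMod 2, z = b ∨ z = b + 1 := by decide

lemma setZMod (B : Set (ZMod 2)) : B = ∅ ∨ B = {0} ∨ B = {1} ∨ B = Set.univ := by
  by_cases h0 : (0 : ZMod 2) ∈ B <;> by_cases h1 : (1 : ZMod 2) ∈ B
  · right; right; right; ext z; rcases zmod2_cases z with rfl | rfl <;> simp [h0, h1]
  · right; left; ext z; rcases zmod2_cases z with rfl | rfl <;> simp [h0, h1]
  · right; right; left; ext z; rcases zmod2_cases z with rfl | rfl <;> simp [h0, h1]
  · left; ext z; rcases zmod2_cases z with rfl | rfl <;> simp [h0, h1]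

variable (μ : Measure G) [IsProbabilityMeasure μ] [μ.IsAddLeftInvariant]

set_option linter.unusedSectionVars false

/-- key step: a coordinate cylinder is independent of a flip-invariant set. -/
lemma step (j : ℕ) (T : Set G) (hT : MeasurableSet T)
    (hinv : ∀ x : G, (fun i => if i = j then x i + 1 else x i) ∈ T ↔ x ∈ T) (b : ZMod 2) :
    μ ((fun x : G => x j) ⁻¹' {b} ∩ T) = 2⁻¹ * μ T := by
  classical
  set δ : G := fun i => if i = j then 1 else 0 with hδ
  have hpre : ∀ c : ZMod 2,
      (δ + ·) ⁻¹' ((fun x : G => x j) ⁻¹' {c} ∩ T) =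
        (fun x : G => x j) ⁻¹' {c + 1} ∩ T := by
    intro c
    ext x
    have h1 : (δ + x) j = 1 + x j := by simp [hδ]
    have h2 : δ + x = (fun i => if i = j then x i + 1 else x i) := by
      funext i
      by_cases h : i = j <;> simp [hδ, h, add_comm]
    simp only [Set.mem_preimage, Set.mem_inter_iff, Set.mem_singleton_iff]
    rw [h1, h2, hinv, zmod2_key (x j) c]
  have hmeas : ∀ c : ZMod 2, MeasurableSet ((fun x : G => x j) ⁻¹' {c} ∩ T) := fun c =>
    ((measurable_pi_apply j) (MeasurableSet.singleton c)).inter hT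
  have heq : μ ((fun x : G => x j) ⁻¹' {b} ∩ T) = μ ((fun x : G => x j) ⁻¹' {b + 1} ∩ T) := by
    conv_rhs => rw [← hpre b]
    rw [measure_preimage_add]
  have hdisj : Disjoint ((fun x : G => x j) ⁻¹' {b} ∩ T)
      ((fun x : G => x j) ⁻¹' {b + 1} ∩ T) := by
    rw [Set.disjoint_left]
    rintro x ⟨hx1, -⟩ ⟨hx2, -⟩
    simp only [Set.mem_preimage, Set.mem_singleton_iff] at hx1 hx2
    exact zmod2_ne b (hx1 ▸ hx2)
  have hunion : ((fun x : G => x j) ⁻¹' {b} ∩ T) ∪ ((fun x : G => x j) ⁻¹' {b + 1} ∩ T) = T := by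
    rw [← Set.union_inter_distrib_right]
    have : (fun x : G => x j) ⁻¹' {b} ∪ (fun x : G => x j) ⁻¹' {b + 1} = Set.univ := by
      ext x
      simp only [Set.mem_union, Set.mem_preimage, Set.mem_singleton_iff, Set.mem_univ, iff_true]
      exact zmod2_cover (x j) b
    rw [this, Set.univ_inter]
  have hsum : μ ((fun x : G => x j) ⁻¹' {b} ∩ T) + μ ((fun x : G => x j) ⁻¹' {b + 1} ∩ T)
      = μ T := by
    rw [← measure_union hdisj (hmeas _), hunion]
  rw [← heq, ← two_mul] at hsum
  have h2 : (2 : ℝ≥0∞) ≠ 0 := by norm_num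
  have h2' : (2 : ℝ≥0∞) ≠ ⊤ := by norm_num
  calc μ ((fun x : G => x j) ⁻¹' {b} ∩ T)
      = 2⁻¹ * (2 * μ ((fun x : G => x j) ⁻¹' {b} ∩ T)) := by
        rw [← mul_assoc, ENNReal.inv_mul_cancel h2 h2', one_mul]
    _ = 2⁻¹ * μ T := by rw [hsum]

lemma coord_meas (i : ℕ) (B : Set (ZMod 2)) : MeasurableSet ((fun x : G => x i) ⁻¹' B) :=
  (measurable_pi_apply i) (MeasurableSet.of_discrete)

lemma mu_coord (j : ℕ) (b : ZMod 2) : μ ((fun x : G => x j) ⁻¹' {b}) = 2⁻¹ := by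
  have := step μ j Set.univ MeasurableSet.univ (fun x => by simp) b
  simpa using this

/-- product formula for finitely many coordinates -/
lemma prodL (S : Finset ℕ) (B : ℕ → Set (ZMod 2)) :
    μ (⋂ i ∈ S, (fun x : G => x i) ⁻¹' B i) = ∏ i ∈ S, μ ((fun x : G => x i) ⁻¹' B i) := by
  classical
  induction S using Finset.induction_on with
  | empty => simp
  | @insert j S hj IH =>
    rw [Finset.set_biInter_insert, Finset.prod_insert hj, ← IH]
    set T : Set G := ⋂ i ∈ S, (fun x : G => x i) ⁻¹' B i with hTdef
    have hT : MeasurableSet T := MeasurableSet.biInter (Set.to_countable _)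
      (fun i _ => coord_meas i (B i))
    have hinv : ∀ x : G, (fun i => if i = j then x i + 1 else x i) ∈ T ↔ x ∈ T := by
      intro x
      simp only [hTdef, Set.mem_iInter, Set.mem_preimage]
      refine forall₂_congr fun i hi => ?_
      have : i ≠ j := fun h => hj (h ▸ hi)
      rw [if_neg this]
    rcases setZMod (B j) with hB | hB | hB | hB
    · simp [hB]
    · rw [hB, step μ j T hT hinv 0, mu_coord μ j 0]
    · rw [hB, step μ j T hT hinv 1, mu_coord μ j 1]
    · simp [hB]

lemma singleton_null (x₀ : G) : μ {x₀} = 0 := by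
  have hle : ∀ n : ℕ, μ {x₀} ≤ (2 : ℝ≥0∞)⁻¹ ^ n := by
    intro n
    have hsub : {x₀} ⊆ ⋂ i ∈ Finset.range n, (fun x : G => x i) ⁻¹' {x₀ i} := by
      rintro x rfl
      simp
    calc μ {x₀} ≤ μ (⋂ i ∈ Finset.range n, (fun x : G => x i) ⁻¹' {x₀ i}) := measure_mono hsub
      _ = ∏ i ∈ Finset.range n, μ ((fun x : G => x i) ⁻¹' {x₀ i}) := prodL μ _ _
      _ = (2 : ℝ≥0∞)⁻¹ ^ n := by
          rw [Finset.prod_congr rfl fun i _ => mu_coord μ i (x₀ i)]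
          simp
  have htend : Tendsto (fun n : ℕ => (2 : ℝ≥0∞)⁻¹ ^ n) atTop (nhds 0) :=
    ENNReal.tendsto_pow_atTop_nhds_zero_of_lt_one (by norm_num)
  exact le_antisymm (ge_of_tendsto' htend hle) zero_le

end E0Aux

namespace E0Aux2
open E0Aux ProbabilityTheory

lemma indep (μ : Measure G) [IsProbabilityMeasure μ] [μ.IsAddLeftInvariant] :
    iIndep (fun n => MeasurableSpace.comap (fun x : G => x n) inferInstance) μ := by
  classical
  rw [iIndep_iff]
  intro S f hf
  choose B hB hfB using hf
  set B' : ℕ → Set (ZMod 2) := fun i => if hi : i ∈ S then B i hi else Set.univ with hB'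
  have hfB' : ∀ i ∈ S, f i = (fun x : G => x i) ⁻¹' B' i := by
    intro i hi
    rw [← hfB i hi]
    simp [hB', hi]
  calc μ (⋂ i ∈ S, f i) = μ (⋂ i ∈ S, (fun x : G => x i) ⁻¹' B' i) := by
        exact congrArg μ (Set.iInter₂_congr hfB')
    _ = ∏ i ∈ S, μ ((fun x : G => x i) ⁻¹' B' i) := prodL μ S B'
    _ = ∏ i ∈ S, μ (f i) := Finset.prod_congr rfl fun i hi => by rw [hfB' i hi]

lemma tail_meas (t : Set G) (ht : MeasurableSet t)
    (hinv : ∀ x x' : G, {n | x n ≠ x' n}.Finite → (x ∈ t ↔ x' ∈ t)) :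
    MeasurableSet[Filter.limsup
      (fun n => MeasurableSpace.comap (fun x : G => x n) inferInstance) Filter.atTop] t := by
  rw [Filter.limsup_eq_iInf_iSup_of_nat, MeasurableSpace.measurableSet_iInf]
  intro n
  set mn : MeasurableSpace G :=
    ⨆ i ≥ n, MeasurableSpace.comap (fun x : G => x i) inferInstance with hmn
  let φ : G → G := fun x i => if i < n then 0 else x i
  have hφ : @Measurable G G mn MeasurableSpace.pi φ := by
    refine measurable_pi_iff.mpr fun j => ?_
    by_cases hj : j < n
    · simp only [φ, if_pos hj]
      exact measurable_const
    · simp only [φ, if_neg hj]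
      have h1 : @Measurable G (ZMod 2)
          (MeasurableSpace.comap (fun x : G => x j) inferInstance) _ (fun x => x j) :=
        measurable_iff_comap_le.mpr le_rfl
      exact h1.mono (le_iSup₂ (f := fun i (_ : i ≥ n) =>
        MeasurableSpace.comap (fun x : G => x i) inferInstance) j (not_lt.1 hj)) le_rfl
  have hφt : φ ⁻¹' t = t := by
    ext x
    exact hinv (φ x) x (Set.Finite.subset (Set.finite_Iio n) fun m hm => by
      simp only [Set.mem_setOf_eq, φ] at hm
      by_contra h
      simp only [Set.mem_Iio, not_lt] at h
      exact hm (by rw [if_neg (not_lt.2 h)]))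
  rw [← hφt]
  exact hφ ht

lemma countable_class (x₀ : G) : Set.Countable {x : G | {n | x n ≠ x₀ n}.Finite} := by
  classical
  have hrw : {x : G | {n | x n ≠ x₀ n}.Finite}
      = ⋃ s : Finset ℕ, {x : G | ∀ i ∉ s, x i = x₀ i} := by
    ext x
    simp only [Set.mem_setOf_eq, Set.mem_iUnion]
    constructor
    · intro h
      refine ⟨h.toFinset, fun i hi => ?_⟩
      by_contra h'
      exact hi (h.mem_toFinset.2 h')
    · rintro ⟨s, hs⟩
      exact s.finite_toSet.subset fun i hi => by
        by_contra h'
        exact hi (hs i h')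
  rw [hrw]
  refine Set.countable_iUnion fun s => Set.Finite.countable ?_
  have hinj : Function.Injective
      (fun (x : {x : G // ∀ i ∉ s, x i = x₀ i}) (i : s) => x.1 i) := by
    intro x x' h
    refine Subtype.ext (funext fun i => ?_)
    by_cases hi : i ∈ s
    · exact congrFun h ⟨i, hi⟩
    · rw [x.2 i hi, x'.2 i hi]
  exact Set.finite_coe_iff.mp (Finite.of_injective _ hinj)

lemma not_smooth_G :
    ¬ ∃ F : G → G, Measurable F ∧
      ∀ x x' : G, F x = F x' ↔ {n : ℕ | x n ≠ x' n}.Finite := by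
  classical
  rintro ⟨F, hF, hFE⟩
  set μ : Measure G := Measure.addHaarMeasure (⊤ : TopologicalSpace.PositiveCompacts G) with hμ
  haveI : IsProbabilityMeasure μ := ⟨by
    simpa using Measure.addHaarMeasure_self (K₀ := (⊤ : TopologicalSpace.PositiveCompacts G))⟩
  haveI : μ.IsAddLeftInvariant := by rw [hμ]; infer_instance
  haveI : NullSingletonClass μ := ⟨fun x => singleton_null μ x⟩
  set A : ℕ → Set G := fun m => F ⁻¹' ((fun z : G => z m) ⁻¹' {1}) with hA
  have hAmeas : ∀ m, MeasurableSet (A m) := fun m => hF (coord_meas m {1})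
  have h01 : ∀ m, μ (A m) = 0 ∨ μ (A m) = 1 := by
    intro m
    refine measure_zero_or_one_of_measurableSet_limsup_atTop
      (fun n => (measurable_pi_apply n).comap_le) (indep μ) (tail_meas (A m) (hAmeas m) ?_)
    intro x x' h
    simp only [hA, Set.mem_preimage, Set.mem_singleton_iff, (hFE x x').2 h]
  set y : G := fun m => if μ (A m) = 1 then 1 else 0 with hy
  set Bs : ℕ → Set G := fun m => F ⁻¹' ((fun z : G => z m) ⁻¹' {y m}) with hBs
  have hBmeas : ∀ m, MeasurableSet (Bs m) := fun m => hF (coord_meas m {y m})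
  have hBone : ∀ m, μ (Bs m) = 1 := by
    intro m
    by_cases h : μ (A m) = 1
    · have h' := h
      simp only [hA] at h'
      have : Bs m = A m := by simp only [hBs, hA, hy, if_pos h']
      rw [this]; exact h
    · rcases h01 m with h0 | h1
      · have hzn : ∀ z : ZMod 2, z = 0 ↔ ¬ z = 1 := by decide
        have h' := h
        simp only [hA] at h'
        have : Bs m = (A m)ᶜ := by
          ext x
          simp only [hBs, hA, hy, if_neg h, if_neg h', Set.mem_preimage, Set.mem_singleton_iff,
            Set.mem_compl_iff, hzn]
        rw [this, measure_compl (hAmeas m) (measure_ne_top μ _), h0, measure_univ, tsub_zero]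
      · exact absurd h1 h
  have hI : μ (⋂ m, Bs m) = 1 := by
    rw [← prob_compl_eq_zero_iff (MeasurableSet.iInter fun m => hBmeas m)]
    rw [Set.compl_iInter]
    refine measure_iUnion_null fun m => ?_
    rw [measure_compl (hBmeas m) (measure_ne_top μ _), hBone m, measure_univ, tsub_self]
  have hIy : (⋂ m, Bs m) = F ⁻¹' {y} := by
    ext x
    simp only [hBs, Set.mem_iInter, Set.mem_preimage, Set.mem_singleton_iff, funext_iff]
  rcases Set.eq_empty_or_nonempty (F ⁻¹' {y}) with he | ⟨x₀, hx₀⟩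
  · rw [hIy, he] at hI
    simp at hI
  · have hsubset : F ⁻¹' {y} ⊆ {x : G | {n | x n ≠ x₀ n}.Finite} := by
      intro x hx
      exact (hFE x x₀).1 (by
        rw [Set.mem_preimage, Set.mem_singleton_iff] at hx hx₀
        rw [hx, hx₀])
    have h0 : μ (F ⁻¹' {y}) = 0 :=
      measure_mono_null hsubset ((countable_class x₀).measure_zero μ)
    rw [hIy, h0] at hI
    simp at hI

end E0Aux2


/-- The relation `E₀` on Cantor space `2^ℕ` (eventual agreement) is not smooth:
no Borel map `f : 2^ℕ → 2^ℕ` satisfies `f η = f η' ↔ η E₀ η'`. -/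
theorem E0_not_smooth :
    ¬ ∃ f : (ℕ → Bool) → (ℕ → Bool), Measurable f ∧
      ∀ η η' : ℕ → Bool, f η = f η' ↔ {n : ℕ | η n ≠ η' n}.Finite := by
  classical
  rintro ⟨f, hf, hfE⟩
  apply E0Aux2.not_smooth_G
  set e : E0Aux.G → (ℕ → Bool) := fun x n => decide (x n = 1) with he
  set e' : (ℕ → Bool) → E0Aux.G := fun y n => if y n then 1 else 0 with he'
  have hem : Measurable e :=
    measurable_pi_lambda _ fun n =>
      (Measurable.of_discrete (f := fun z : ZMod 2 => decide (z = 1))).comp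
        (measurable_pi_apply n)
  have he'm : Measurable e' :=
    measurable_pi_lambda _ fun n =>
      (Measurable.of_discrete (f := fun b : Bool => if b then (1 : ZMod 2) else 0)).comp
        (measurable_pi_apply n)
  have he'inj : Function.Injective e' := by
    intro y y' h
    funext n
    have := congrFun h n
    simp only [he'] at this
    cases hy : y n <;> cases hy' : y' n <;> rw [hy, hy'] at this <;> simp_all
  refine ⟨fun x => e' (f (e x)), he'm.comp (hf.comp hem), fun x x' => ?_⟩
  have hkey : ∀ a b : ZMod 2, (decide (a = 1) ≠ decide (b = 1)) ↔ a ≠ b := by decide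
  have hset : {n | e x n ≠ e x' n} = {n | x n ≠ x' n} := by
    ext n
    simp only [he, Set.mem_setOf_eq]
    exact hkey (x n) (x' n)
  constructor
  · intro h
    rw [← hset]
    exact (hfE (e x) (e x')).1 (he'inj h)
  · intro h
    exact congrArg e' ((hfE (e x) (e x')).2 (by rw [hset]; exact h))
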